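/- Let Φ be a locally finite set of points in ℝ² that is (σ,ρ,ν)-ring regulated about the origin, with every point of Φ at distance greater than r₀ from the origin, let ℓ be a path-loss function as in the context and γ₀ > 0. Then for every x ∈ Φ, the rate satisfies R(x, Φ) ≥ log₂(1 + η(‖x‖)), where η(r) = (γ₀/ℓ(r) + σ_β + ρ_β r + ν_β r²)^{−1}. -/

import Mathlib

open MeasureTheory Set

noncomputable section

abbrev Plane : Type := EuclideanSpace ℝ (Fin 2)

/-- `Φ` is `(σ,ρ,ν)`-ring regulated about the origin. -/
def RingRegulated (Φ : Set Plane) (σ ρ ν : ℝ) : Prop :=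
  ∀ r R : ℝ, 0 ≤ r → r < R →
    ((Φ ∩ {z : Plane | r < ‖z‖ ∧ ‖z‖ < R}).ncard : ℝ)
      ≤ σ + ρ * (R - r) + ν * (R ^ 2 - r ^ 2)

/-- The tail interference at the origin from points of `Φ` at distance greater than `r`. -/
def tailInterference (ℓ : ℝ → ℝ) (Φ : Set Plane) (r : ℝ) : ℝ :=
  ∑' w : {w : Plane // w ∈ Φ ∧ r < ‖w‖}, ℓ ‖(w : Plane)‖

/-- The signal-to-residual-interference-plus-noise ratio of the transmitter at `x`
with respect to the receiver at the origin, under successive interference cancellation. -/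
def SrINR (ℓ : ℝ → ℝ) (γ₀ : ℝ) (Φ : Set Plane) (x : Plane) : ℝ :=
  ℓ ‖x‖ / (tailInterference ℓ Φ ‖x‖ + γ₀)

/-- The deterministic lower bound `η(r)` on the SrINR at distance `r`. -/
def eta (ℓ : ℝ → ℝ) (γ₀ σβ ρβ νβ : ℝ) (r : ℝ) : ℝ :=
  (γ₀ / ℓ r + σβ + ρβ * r + νβ * r ^ 2)⁻¹

/-- The rate of the link from `x` to the typical receiver at the origin:
the infimum over the transmitters `w ∈ Φ` with `‖w‖ ≤ ‖x‖` of `log₂(1 + SrINR(w,Φ))`. -/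
def rate (ℓ : ℝ → ℝ) (γ₀ : ℝ) (Φ : Set Plane) (x : Plane) : ℝ :=
  sInf ((fun w => Real.logb 2 (1 + SrINR ℓ γ₀ Φ w)) '' {w ∈ Φ | ‖w‖ ≤ ‖x‖})

lemma swap_slice {g : ℝ → ℝ} (hg : Measurable g) (a : ℝ) :
    ∫⁻ u in Ioi (0:ℝ), volume {t | a < t ∧ u < g t} = ∫⁻ t in Ioi a, ENNReal.ofReal (g t) := by
  have hW : MeasurableSet {p : ℝ × ℝ | a < p.2 ∧ p.1 < g p.2} :=
    (measurableSet_lt measurable_const measurable_snd).inter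
      (measurableSet_lt measurable_fst (hg.comp measurable_snd))
  calc ∫⁻ u in Ioi (0:ℝ), volume {t | a < t ∧ u < g t}
      = ∫⁻ u in Ioi (0:ℝ), ∫⁻ t, {p : ℝ × ℝ | a < p.2 ∧ p.1 < g p.2}.indicator 1 (u, t) := by
        refine lintegral_congr fun u => ?_
        have hmeas : MeasurableSet {t | a < t ∧ u < g t} :=
          (measurableSet_lt measurable_const measurable_id).inter
            (measurableSet_lt measurable_const hg)
        rw [← lintegral_indicator_one hmeas]
        refine lintegral_congr fun t => ?_
        simp [Set.indicator_apply, Set.mem_setOf_eq]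
    _ = ∫⁻ t, ∫⁻ u in Ioi (0:ℝ), {p : ℝ × ℝ | a < p.2 ∧ p.1 < g p.2}.indicator 1 (u, t) :=
        lintegral_lintegral_swap ((measurable_one.indicator hW).aemeasurable)
    _ = ∫⁻ t, (Ioi a).indicator (fun t => ENNReal.ofReal (g t)) t := by
        refine lintegral_congr fun t => ?_
        by_cases hat : a < t
        · rw [Set.indicator_of_mem (show t ∈ Ioi a from hat)]
          have h1 : ∀ u : ℝ, {p : ℝ × ℝ | a < p.2 ∧ p.1 < g p.2}.indicator 1 (u, t)
              = (Iio (g t)).indicator (1 : ℝ → ENNReal) u := by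
            intro u; simp [Set.indicator_apply, hat]
          rw [lintegral_congr h1, lintegral_indicator_one measurableSet_Iio,
            Measure.restrict_apply measurableSet_Iio]
          have : Iio (g t) ∩ Ioi 0 = Ioo 0 (g t) := by ext u; simp [Set.mem_Ioo, and_comm]
          rw [this, Real.volume_Ioo, sub_zero]
        · rw [Set.indicator_of_notMem (show t ∉ Ioi a from hat)]
          have h1 : ∀ u : ℝ, {p : ℝ × ℝ | a < p.2 ∧ p.1 < g p.2}.indicator 1 (u, t)
              = (0 : ENNReal) := by
            intro u; simp [Set.indicator_apply, hat]
          rw [lintegral_congr h1]; simp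
    _ = ∫⁻ t in Ioi a, ENNReal.ofReal (g t) := lintegral_indicator measurableSet_Ioi _

lemma phi_countable {Φ : Set Plane} (hloc : ∀ R : ℝ, (Φ ∩ Metric.closedBall 0 R).Finite) :
    Φ.Countable := by
  have h : Φ ⊆ ⋃ n : ℕ, Φ ∩ Metric.closedBall 0 n := by
    intro z hz
    obtain ⟨n, hn⟩ := exists_nat_ge ‖z‖
    exact mem_iUnion.2 ⟨n, hz, by simpa [Metric.mem_closedBall, dist_zero_right] using hn⟩
  exact Set.Countable.mono h (countable_iUnion fun n => (hloc n).countable)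

lemma tail_le (Φ : Set Plane) (σ ρ ν : ℝ)
    (hσ : 0 ≤ σ) (hρ : 0 ≤ ρ) (hν : 0 ≤ ν)
    (hloc : ∀ R : ℝ, (Φ ∩ Metric.closedBall 0 R).Finite)
    (hreg : RingRegulated Φ σ ρ ν)
    (ℓ : ℝ → ℝ) (hℓ0 : ∀ r, 0 ≤ ℓ r)
    (hℓanti : AntitoneOn ℓ (Set.Ici 0))
    (C C' r₀ β : ℝ) (hC' : 0 < C') (hCC' : C' ≤ C) (hr₀ : 0 < r₀) (hβ : 2 < β)
    (hℓub : ∀ r, r₀ < r → ℓ r ≤ C * r ^ (-β))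
    (s : ℝ) (hs : r₀ < s) :
    tailInterference ℓ Φ s ≤
      σ * ℓ s + ρ * (C * s ^ (1 - β) / (β - 1)) + ν * (2 * C * s ^ (2 - β) / (β - 2)) := by
  have hs0 : 0 < s := hr₀.trans hs
  have hC : 0 < C := hC'.trans_le hCC'
  have hβ1 : (1:ℝ) < β := by linarith
  haveI : Countable {w : Plane // w ∈ Φ ∧ s < ‖w‖} := by
    have : ({w : Plane | w ∈ Φ ∧ s < ‖w‖}).Countable :=
      Set.Countable.mono (fun w hw => hw.1) (phi_countable hloc)
    exact this.to_subtype
  -- the monotone extension of ℓ to all of ℝ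
  set ℓm : ℝ → ℝ := fun t => ℓ (max t 0) with hℓm_def
  have hℓm_anti : Antitone ℓm := fun a b hab =>
    hℓanti (le_max_right a 0) (le_max_right b 0) (max_le_max hab le_rfl)
  have hℓm_meas : Measurable ℓm := hℓm_anti.measurable
  have hℓm_eq : ∀ t : ℝ, 0 ≤ t → ℓm t = ℓ t := fun t ht => by
    simp [hℓm_def, max_eq_left ht]
  set ℓm2 : ℝ → ℝ := fun v => ℓ (Real.sqrt v) with hℓm2_def
  have hℓm2_eq : ∀ v : ℝ, ℓm2 v = ℓm (Real.sqrt v) := fun v =>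
    (hℓm_eq _ (Real.sqrt_nonneg v)).symm
  have hℓm2_anti : Antitone ℓm2 := fun a b hab => by
    rw [hℓm2_eq, hℓm2_eq]; exact hℓm_anti (Real.sqrt_le_sqrt hab)
  have hℓm2_meas : Measurable ℓm2 := hℓm2_anti.measurable
  -- the sets A u, A2 u
  set A : ℝ → Set ℝ := fun u => {t | s < t ∧ u < ℓm t} with hA_def
  set A2 : ℝ → Set ℝ := fun u => {v | s ^ 2 < v ∧ u < ℓm2 v} with hA2_def
  have hvolA_anti : Antitone fun u => volume (A u) := fun u1 u2 h12 =>
    measure_mono fun t ht => ⟨ht.1, lt_of_le_of_lt h12 ht.2⟩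
  have hvolA2_anti : Antitone fun u => volume (A2 u) := fun u1 u2 h12 =>
    measure_mono fun t ht => ⟨ht.1, lt_of_le_of_lt h12 ht.2⟩
  have hvolA_meas : Measurable fun u => volume (A u) := hvolA_anti.measurable
  have hvolA2_meas : Measurable fun u => volume (A2 u) := hvolA2_anti.measurable
  -- the supremum T u
  set Tset : ℝ → Set ℝ := fun u => {t : ℝ | s < t ∧ u < ℓ t} with hTset_def
  set T : ℝ → ℝ := fun u => sSup (insert s (Tset u)) with hT_def
  have hTbdd : ∀ u : ℝ, 0 < u → BddAbove (insert s (Tset u)) := by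
    intro u hu
    refine ⟨max s ((C / u) ^ β⁻¹), ?_⟩
    rintro t (rfl | ⟨hts, htu⟩)
    · exact le_max_left _ _
    · have ht0 : 0 < t := hs0.trans hts
      have h1 : u < C * (t ^ β)⁻¹ := by
        have := (htu.trans_le (hℓub t (hs.trans hts))).trans_eq
          (by rw [Real.rpow_neg ht0.le])
        exact this
      have h2 : t ^ β < C / u := by
        rw [lt_div_iff₀ hu]
        have h3 : 0 < t ^ β := Real.rpow_pos_of_pos ht0 β
        calc t ^ β * u < t ^ β * (C * (t ^ β)⁻¹) := by
              exact (mul_lt_mul_iff_right₀ h3).2 h1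
          _ = C := by field_simp
      have h4 : t ≤ (C / u) ^ β⁻¹ := by
        calc t = (t ^ β) ^ β⁻¹ := (Real.rpow_rpow_inv ht0.le (by positivity)).symm
          _ ≤ (C / u) ^ β⁻¹ := Real.rpow_le_rpow (by positivity) h2.le (by positivity)
      exact le_max_of_le_right h4
  have hsT : ∀ u : ℝ, 0 < u → s ≤ T u := fun u hu =>
    le_csSup (hTbdd u hu) (mem_insert _ _)
  have hmemT : ∀ u : ℝ, 0 < u → ∀ t ∈ Tset u, t ≤ T u := fun u hu t ht =>
    le_csSup (hTbdd u hu) (mem_insert_of_mem _ ht)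
  have hIooT : ∀ u : ℝ, 0 < u → Ioo s (T u) ⊆ Tset u := by
    intro u hu t ht
    obtain ⟨y, hy, hty⟩ := exists_lt_of_lt_csSup ⟨s, mem_insert _ _⟩ ht.2
    rcases hy with rfl | ⟨hy1, hy2⟩
    · exact absurd ht.1 (not_lt.2 hty.le)
    · exact ⟨ht.1, hy2.trans_le (hℓanti (le_of_lt (hs0.trans ht.1))
        (le_of_lt (hs0.trans hy1)) hty.le)⟩
  have hvolA : ∀ u : ℝ, 0 < u → volume (A u) = ENNReal.ofReal (T u - s) := by
    intro u hu
    have h1 : A u ⊆ Ioc s (T u) := by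
      intro t ht
      have ht' : t ∈ Tset u := ⟨ht.1, by
        have := ht.2; rwa [hℓm_eq t (le_of_lt (hs0.trans ht.1))] at this⟩
      exact ⟨ht.1, hmemT u hu t ht'⟩
    have h2 : Ioo s (T u) ⊆ A u := by
      intro t ht
      have ht' := hIooT u hu ht
      exact ⟨ht'.1, by rw [hℓm_eq t (le_of_lt (hs0.trans ht.1))]; exact ht'.2⟩
    refine le_antisymm ?_ ?_
    · calc volume (A u) ≤ volume (Ioc s (T u)) := measure_mono h1
        _ = ENNReal.ofReal (T u - s) := Real.volume_Ioc
    · calc ENNReal.ofReal (T u - s) = volume (Ioo s (T u)) := Real.volume_Ioo.symm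
        _ ≤ volume (A u) := measure_mono h2
  have hvolA2 : ∀ u : ℝ, 0 < u → volume (A2 u) = ENNReal.ofReal ((T u) ^ 2 - s ^ 2) := by
    intro u hu
    have hT0 : 0 < T u := hs0.trans_le (hsT u hu)
    have h1 : A2 u ⊆ Ioc (s ^ 2) ((T u) ^ 2) := by
      intro v hv
      have hv0 : (0:ℝ) ≤ v := le_trans (by positivity) hv.1.le
      have hsv : s < Real.sqrt v := (Real.lt_sqrt hs0.le).2 hv.1
      have hv' : Real.sqrt v ∈ Tset u := ⟨hsv, hv.2⟩
      have := hmemT u hu _ hv'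
      refine ⟨hv.1, ?_⟩
      calc v = (Real.sqrt v) ^ 2 := (Real.sq_sqrt hv0).symm
        _ ≤ (T u) ^ 2 := by
          apply pow_le_pow_left₀ (Real.sqrt_nonneg v) this
    have h2 : Ioo (s ^ 2) ((T u) ^ 2) ⊆ A2 u := by
      intro v hv
      have hsv : s < Real.sqrt v := (Real.lt_sqrt hs0.le).2 hv.1
      have hvT : Real.sqrt v < T u := (Real.sqrt_lt' hT0).2 hv.2
      have := hIooT u hu ⟨hsv, hvT⟩
      exact ⟨hv.1, this.2⟩
    refine le_antisymm ?_ ?_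
    · calc volume (A2 u) ≤ volume (Ioc (s ^ 2) ((T u) ^ 2)) := measure_mono h1
        _ = ENNReal.ofReal ((T u) ^ 2 - s ^ 2) := Real.volume_Ioc
    · calc ENNReal.ofReal ((T u) ^ 2 - s ^ 2) = volume (Ioo (s ^ 2) ((T u) ^ 2)) :=
          Real.volume_Ioo.symm
        _ ≤ volume (A2 u) := measure_mono h2
  -- the count bound
  set K : ℝ → Set Plane := fun u => {z | z ∈ Φ ∧ s < ‖z‖ ∧ u < ℓ ‖z‖} with hK_def
  have hKsub : ∀ u : ℝ, 0 < u → K u ⊆ Φ ∩ Metric.closedBall 0 (T u) := by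
    intro u hu z hz
    exact ⟨hz.1, by
      rw [Metric.mem_closedBall, dist_zero_right]
      exact hmemT u hu _ ⟨hz.2.1, hz.2.2⟩⟩
  have hKfin : ∀ u : ℝ, 0 < u → (K u).Finite := fun u hu =>
    (hloc (T u)).subset (hKsub u hu)
  have hKcard : ∀ u : ℝ, 0 < u →
      (((K u).ncard : ℝ)) ≤ σ + ρ * (T u - s) + ν * ((T u) ^ 2 - s ^ 2) := by
    intro u hu
    have hε : ∀ ε : ℝ, 0 < ε →
        (((K u).ncard : ℝ)) ≤ σ + ρ * (T u + ε - s) + ν * ((T u + ε) ^ 2 - s ^ 2) := by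
      intro ε hε
      have h1 : K u ⊆ Φ ∩ {z : Plane | s < ‖z‖ ∧ ‖z‖ < T u + ε} := by
        intro z hz
        refine ⟨hz.1, hz.2.1, ?_⟩
        calc ‖z‖ ≤ T u := hmemT u hu _ ⟨hz.2.1, hz.2.2⟩
          _ < T u + ε := by linarith
      have h2 : (Φ ∩ {z : Plane | s < ‖z‖ ∧ ‖z‖ < T u + ε}).Finite := by
        refine (hloc (T u + ε)).subset fun z hz => ⟨hz.1, ?_⟩
        rw [Metric.mem_closedBall, dist_zero_right]; exact hz.2.2.le
      calc (((K u).ncard : ℝ)) ≤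
          ((Φ ∩ {z : Plane | s < ‖z‖ ∧ ‖z‖ < T u + ε}).ncard : ℝ) := by
            exact_mod_cast Nat.cast_le.2 (Set.ncard_le_ncard h1 h2)
        _ ≤ σ + ρ * (T u + ε - s) + ν * ((T u + ε) ^ 2 - s ^ 2) := by
            refine hreg s (T u + ε) hs0.le ?_
            have := hsT u hu; linarith
    have hcont : Filter.Tendsto
        (fun ε : ℝ => σ + ρ * (T u + ε - s) + ν * ((T u + ε) ^ 2 - s ^ 2))
        (nhdsWithin 0 (Ioi 0)) (nhds (σ + ρ * (T u - s) + ν * ((T u) ^ 2 - s ^ 2))) := by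
      apply Filter.Tendsto.mono_left ?_ nhdsWithin_le_nhds
      have hc : Continuous (fun ε : ℝ =>
          σ + ρ * (T u + ε - s) + ν * ((T u + ε) ^ 2 - s ^ 2)) := by fun_prop
      simpa using hc.tendsto 0
    exact ge_of_tendsto hcont (eventually_nhdsWithin_of_forall fun ε h => hε ε h)
  -- main computation in ℝ≥0∞
  set F : ℝ → ENNReal := fun u =>
    ∑' w : {w : Plane // w ∈ Φ ∧ s < ‖w‖},
      (Ioo (0:ℝ) (ℓ ‖(w : Plane)‖)).indicator 1 u with hF_def
  have hE : (∑' w : {w : Plane // w ∈ Φ ∧ s < ‖w‖}, ENNReal.ofReal (ℓ ‖(w : Plane)‖))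
      = ∫⁻ u, F u := by
    rw [hF_def,
      lintegral_tsum fun w => (measurable_one.indicator measurableSet_Ioo).aemeasurable]
    exact tsum_congr fun w => by
      rw [lintegral_indicator_one measurableSet_Ioo, Real.volume_Ioo, sub_zero]
  set G : ℝ → ENNReal := (Ioo 0 (ℓ s)).indicator (fun u =>
    ENNReal.ofReal σ + ENNReal.ofReal ρ * volume (A u)
      + ENNReal.ofReal ν * volume (A2 u)) with hG_def
  have hFG : ∀ u, F u ≤ G u := by
    intro u
    by_cases hu : u ∈ Ioo 0 (ℓ s)
    · have hu0 : 0 < u := hu.1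
      have h1 : ∀ w : {w : Plane // w ∈ Φ ∧ s < ‖w‖},
          (Ioo (0:ℝ) (ℓ ‖(w : Plane)‖)).indicator (1 : ℝ → ENNReal) u
          = ({w : {w : Plane // w ∈ Φ ∧ s < ‖w‖} | u < ℓ ‖(w : Plane)‖}).indicator
              (fun _ => (1:ENNReal)) w := by
        intro w
        by_cases h : u < ℓ ‖(w : Plane)‖ <;>
          simp [Set.indicator_apply, Set.mem_Ioo, hu0, h]
      have h2 : F u
          = ({w : {w : Plane // w ∈ Φ ∧ s < ‖w‖} | u < ℓ ‖(w : Plane)‖}).encard := by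
        simp only [hF_def]
        rw [tsum_congr h1, ← tsum_subtype]
        exact ENNReal.tsum_set_one _
      have h3 : Subtype.val '' {w : {w : Plane // w ∈ Φ ∧ s < ‖w‖} | u < ℓ ‖(w : Plane)‖}
          = K u := by
        ext z; constructor
        · rintro ⟨w, hw, rfl⟩; exact ⟨w.2.1, w.2.2, hw⟩
        · rintro ⟨hz1, hz2, hz3⟩; exact ⟨⟨z, hz1, hz2⟩, hz3, rfl⟩
      have h4 : ({w : {w : Plane // w ∈ Φ ∧ s < ‖w‖} | u < ℓ ‖(w : Plane)‖}).encard
          = (K u).encard := by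
        rw [← h3]; exact (Set.InjOn.encard_image (Subtype.val_injective.injOn)).symm
      have h5 : (K u).encard = (((K u).ncard : ℕ) : ℕ∞) := by
        rw [Set.ncard_def]
        exact (hKfin u hu0).encard_eq_coe
      have h6 : F u ≤ ENNReal.ofReal (σ + ρ * (T u - s) + ν * ((T u)^2 - s^2)) := by
        rw [h2, h4, h5]
        calc ((((K u).ncard : ℕ) : ℕ∞) : ENNReal) = (((K u).ncard : ℕ) : ENNReal) := by simp
          _ = ENNReal.ofReal (((K u).ncard : ℕ) : ℝ) := (ENNReal.ofReal_natCast _).symm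
          _ ≤ _ := ENNReal.ofReal_le_ofReal (hKcard u hu0)
      have hTs : s ≤ T u := hsT u hu0
      have hT2 : s^2 ≤ (T u)^2 := by nlinarith
      rw [hG_def, Set.indicator_of_mem (show u ∈ Ioo 0 (ℓ s) from hu)]
      calc F u ≤ ENNReal.ofReal (σ + ρ * (T u - s) + ν * ((T u)^2 - s^2)) := h6
        _ = ENNReal.ofReal σ + ENNReal.ofReal (ρ * (T u - s))
            + ENNReal.ofReal (ν * ((T u)^2 - s^2)) := by
            rw [ENNReal.ofReal_add (add_nonneg hσ (mul_nonneg hρ (by linarith)))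
              (mul_nonneg hν (by linarith)),
              ENNReal.ofReal_add hσ (mul_nonneg hρ (by linarith))]
        _ = ENNReal.ofReal σ + ENNReal.ofReal ρ * volume (A u)
            + ENNReal.ofReal ν * volume (A2 u) := by
            rw [ENNReal.ofReal_mul hρ, ENNReal.ofReal_mul hν, hvolA u hu0, hvolA2 u hu0]
    · have h1 : ∀ w : {w : Plane // w ∈ Φ ∧ s < ‖w‖},
          (Ioo (0:ℝ) (ℓ ‖(w : Plane)‖)).indicator (1 : ℝ → ENNReal) u = 0 := by
        intro w
        refine Set.indicator_of_notMem (fun hmem => hu ?_) _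
        rcases (Set.mem_Ioo.1 hmem) with ⟨hm1, hm2⟩
        exact Set.mem_Ioo.2 ⟨hm1, lt_of_lt_of_le hm2
          (hℓanti hs0.le (norm_nonneg _) w.2.2.le)⟩
      have h2 : F u = 0 := by simp only [hF_def]; rw [tsum_congr h1]; exact tsum_zero
      rw [h2]; exact zero_le
  -- the three integral bounds
  have hσpart : ∫⁻ _ in Ioo 0 (ℓ s), ENNReal.ofReal σ = ENNReal.ofReal (σ * ℓ s) := by
    rw [setLIntegral_const, Real.volume_Ioo, sub_zero, ← ENNReal.ofReal_mul hσ]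
  have hρpart : ∫⁻ u in Ioo 0 (ℓ s), ENNReal.ofReal ρ * volume (A u)
      ≤ ENNReal.ofReal (ρ * (C * s ^ (1 - β) / (β - 1))) := by
    rw [lintegral_const_mul _ hvolA_meas, ENNReal.ofReal_mul hρ]
    refine mul_le_mul_right ?_ _
    calc ∫⁻ u in Ioo 0 (ℓ s), volume (A u)
        ≤ ∫⁻ u in Ioi 0, volume (A u) := lintegral_mono_set Ioo_subset_Ioi_self
      _ = ∫⁻ t in Ioi s, ENNReal.ofReal (ℓm t) := swap_slice hℓm_meas s
      _ ≤ ∫⁻ t in Ioi s, ENNReal.ofReal (C * t ^ (-β)) := by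
          refine setLIntegral_mono' measurableSet_Ioi fun t ht => ?_
          have hts : s < t := ht
          rw [hℓm_eq t (hs0.trans hts).le]
          exact ENNReal.ofReal_le_ofReal (hℓub t (hs.trans hts))
      _ = ENNReal.ofReal (C * s ^ (1 - β) / (β - 1)) := by
          have hint : IntegrableOn (fun t : ℝ => C * t ^ (-β)) (Ioi s) :=
            (integrableOn_Ioi_rpow_of_lt (by linarith) hs0).const_mul C
          rw [← ofReal_integral_eq_lintegral_ofReal hint ?_]
          · congr 1
            rw [integral_const_mul, integral_Ioi_rpow_of_lt (by linarith) hs0]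
            rw [show (-β + 1 : ℝ) = 1 - β by ring]
            have h1b : (1:ℝ) - β ≠ 0 := by linarith
            have hb1 : (β:ℝ) - 1 ≠ 0 := by linarith
            field_simp
            ring
          · filter_upwards [ae_restrict_mem measurableSet_Ioi] with t ht
            have ht0 : 0 < t := hs0.trans ht
            positivity
  have hνpart : ∫⁻ u in Ioo 0 (ℓ s), ENNReal.ofReal ν * volume (A2 u)
      ≤ ENNReal.ofReal (ν * (2 * C * s ^ (2 - β) / (β - 2))) := by
    rw [lintegral_const_mul _ hvolA2_meas, ENNReal.ofReal_mul hν]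
    refine mul_le_mul_right ?_ _
    have hs20 : (0:ℝ) < s ^ 2 := by positivity
    calc ∫⁻ u in Ioo 0 (ℓ s), volume (A2 u)
        ≤ ∫⁻ u in Ioi 0, volume (A2 u) := lintegral_mono_set Ioo_subset_Ioi_self
      _ = ∫⁻ v in Ioi (s ^ 2), ENNReal.ofReal (ℓm2 v) := swap_slice hℓm2_meas (s ^ 2)
      _ ≤ ∫⁻ v in Ioi (s ^ 2), ENNReal.ofReal (C * v ^ (-(β/2))) := by
          refine setLIntegral_mono' measurableSet_Ioi fun v hv => ?_
          have hv2 : s ^ 2 < v := hv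
          have hv0 : (0:ℝ) < v := lt_trans hs20 hv2
          have hsv : s < Real.sqrt v := (Real.lt_sqrt hs0.le).2 hv2
          refine ENNReal.ofReal_le_ofReal ?_
          have h1 : ℓm2 v ≤ C * (Real.sqrt v) ^ (-β) := hℓub _ (hs.trans hsv)
          have h2 : (Real.sqrt v) ^ (-β) = v ^ (-(β/2)) := by
            rw [Real.sqrt_eq_rpow, ← Real.rpow_mul hv0.le]
            congr 1; ring
          rw [← h2]; exact h1
      _ = ENNReal.ofReal (2 * C * s ^ (2 - β) / (β - 2)) := by
          have hint : IntegrableOn (fun v : ℝ => C * v ^ (-(β/2))) (Ioi (s ^ 2)) :=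
            (integrableOn_Ioi_rpow_of_lt (by linarith) hs20).const_mul C
          rw [← ofReal_integral_eq_lintegral_ofReal hint ?_]
          · congr 1
            rw [integral_const_mul,
              integral_Ioi_rpow_of_lt (by linarith) hs20]
            have hpow : ((s ^ 2 : ℝ)) ^ (-(β/2) + 1) = s ^ (2 - β) := by
              rw [← Real.rpow_natCast s 2, ← Real.rpow_mul hs0.le]
              congr 1; push_cast; ring
            rw [hpow]
            rw [show (-(β/2) + 1 : ℝ) = -((β-2)/2) by ring, div_neg, neg_div, neg_neg,
              div_div_eq_mul_div]
            ring
          · filter_upwards [ae_restrict_mem measurableSet_Ioi] with v hv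
            have hv0 : (0:ℝ) < v := lt_trans hs20 hv
            positivity
  -- combine
  have hmeas2 : Measurable fun u => ENNReal.ofReal ρ * volume (A u) := hvolA_meas.const_mul _
  have hmeas3 : Measurable fun u => ENNReal.ofReal ν * volume (A2 u) := hvolA2_meas.const_mul _
  have ht1 : (0:ℝ) ≤ σ * ℓ s := mul_nonneg hσ (hℓ0 s)
  have ht2 : (0:ℝ) ≤ ρ * (C * s ^ (1 - β) / (β - 1)) :=
    mul_nonneg hρ (div_nonneg (mul_nonneg hC.le (Real.rpow_nonneg hs0.le _)) (by linarith))
  have ht3 : (0:ℝ) ≤ ν * (2 * C * s ^ (2 - β) / (β - 2)) :=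
    mul_nonneg hν (div_nonneg (mul_nonneg (by linarith) (Real.rpow_nonneg hs0.le _))
      (by linarith))
  have hmain : (∑' w : {w : Plane // w ∈ Φ ∧ s < ‖w‖}, ENNReal.ofReal (ℓ ‖(w : Plane)‖))
      ≤ ENNReal.ofReal (σ * ℓ s + ρ * (C * s ^ (1 - β) / (β - 1))
        + ν * (2 * C * s ^ (2 - β) / (β - 2))) := by
    rw [hE]
    calc ∫⁻ u, F u ≤ ∫⁻ u, G u := lintegral_mono hFG
      _ = ∫⁻ u in Ioo 0 (ℓ s), (ENNReal.ofReal σ + ENNReal.ofReal ρ * volume (A u)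
          + ENNReal.ofReal ν * volume (A2 u)) := by
          rw [hG_def]; exact lintegral_indicator measurableSet_Ioo _
      _ = (∫⁻ _ in Ioo 0 (ℓ s), ENNReal.ofReal σ)
          + (∫⁻ u in Ioo 0 (ℓ s), ENNReal.ofReal ρ * volume (A u))
          + (∫⁻ u in Ioo 0 (ℓ s), ENNReal.ofReal ν * volume (A2 u)) := by
          rw [lintegral_add_right _ hmeas3, lintegral_add_right _ hmeas2]
      _ ≤ ENNReal.ofReal (σ * ℓ s) + ENNReal.ofReal (ρ * (C * s ^ (1 - β) / (β - 1)))
          + ENNReal.ofReal (ν * (2 * C * s ^ (2 - β) / (β - 2))) := by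
          exact add_le_add (add_le_add hσpart.le hρpart) hνpart
      _ = ENNReal.ofReal (σ * ℓ s + ρ * (C * s ^ (1 - β) / (β - 1))
          + ν * (2 * C * s ^ (2 - β) / (β - 2))) := by
          rw [← ENNReal.ofReal_add ht1 ht2, ← ENNReal.ofReal_add (add_nonneg ht1 ht2) ht3]
  have hne : (∑' w : {w : Plane // w ∈ Φ ∧ s < ‖w‖}, ENNReal.ofReal (ℓ ‖(w : Plane)‖))
      ≠ ⊤ := ne_top_of_le_ne_top ENNReal.ofReal_ne_top hmain
  have hsum : Summable fun w : {w : Plane // w ∈ Φ ∧ s < ‖w‖} => ℓ ‖(w : Plane)‖ := by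
    have h := ENNReal.summable_toReal hne
    exact h.congr fun w => ENNReal.toReal_ofReal (hℓ0 _)
  have hB0 : (0:ℝ) ≤ σ * ℓ s + ρ * (C * s ^ (1 - β) / (β - 1))
      + ν * (2 * C * s ^ (2 - β) / (β - 2)) := add_nonneg (add_nonneg ht1 ht2) ht3
  unfold tailInterference
  rw [← ENNReal.ofReal_le_ofReal_iff hB0,
    ENNReal.ofReal_tsum_of_nonneg (fun w => hℓ0 _) hsum]
  exact hmain


theorem stmt4 (Φ : Set Plane) (σ ρ ν : ℝ)
    (hσ : 0 ≤ σ) (hρ : 0 ≤ ρ) (hν : 0 ≤ ν)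
    (hloc : ∀ R : ℝ, (Φ ∩ Metric.closedBall 0 R).Finite)
    (hreg : RingRegulated Φ σ ρ ν)
    (ℓ : ℝ → ℝ) (hℓ0 : ∀ r, 0 ≤ ℓ r)
    (hℓanti : AntitoneOn ℓ (Set.Ici 0))
    (hℓbdd : BddAbove (ℓ '' Set.Ici 0))
    (C C' r₀ β : ℝ) (hC' : 0 < C') (hCC' : C' ≤ C) (hr₀ : 0 < r₀) (hβ : 2 < β)
    (hℓlb : ∀ r, r₀ < r → C' * r ^ (-β) ≤ ℓ r)
    (hℓub : ∀ r, r₀ < r → ℓ r ≤ C * r ^ (-β))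
    (hΦr₀ : ∀ w ∈ Φ, r₀ < ‖w‖)
    (γ₀ : ℝ) (hγ₀ : 0 < γ₀) :
    ∀ x ∈ Φ,
      Real.logb 2
          (1 + eta ℓ γ₀ σ ((C / C') * (ρ / (β - 1))) ((C / C') * (2 * ν / (β - 2))) ‖x‖)
        ≤ rate ℓ γ₀ Φ x := by
  intro x hx
  have hrx : r₀ < ‖x‖ := hΦr₀ x hx
  have hrx0 : 0 < ‖x‖ := hr₀.trans hrx
  have hC : 0 < C := hC'.trans_le hCC'
  set ρβ := (C / C') * (ρ / (β - 1)) with hρβ_def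
  set νβ := (C / C') * (2 * ν / (β - 2)) with hνβ_def
  have hρβ0 : 0 ≤ ρβ := mul_nonneg (by positivity) (div_nonneg hρ (by linarith))
  have hνβ0 : 0 ≤ νβ := mul_nonneg (by positivity)
    (div_nonneg (by linarith) (by linarith))
  have hℓx : 0 < ℓ ‖x‖ :=
    lt_of_lt_of_le (mul_pos hC' (Real.rpow_pos_of_pos hrx0 _)) (hℓlb _ hrx)
  have hD : 0 < γ₀ / ℓ ‖x‖ + σ + ρβ * ‖x‖ + νβ * ‖x‖ ^ 2 := by
    have h1 : 0 < γ₀ / ℓ ‖x‖ := div_pos hγ₀ hℓx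
    have h2 : 0 ≤ ρβ * ‖x‖ := mul_nonneg hρβ0 (norm_nonneg x)
    have h3 : 0 ≤ νβ * ‖x‖ ^ 2 := mul_nonneg hνβ0 (by positivity)
    linarith
  have hη : 0 < eta ℓ γ₀ σ ρβ νβ ‖x‖ := by
    unfold eta; exact inv_pos.2 hD
  unfold rate
  apply le_csInf
    ⟨_, Set.mem_image_of_mem _ (show x ∈ {w ∈ Φ | ‖w‖ ≤ ‖x‖} from ⟨hx, le_rfl⟩)⟩
  rintro b ⟨w, ⟨hwΦ, hwx⟩, rfl⟩
  have hrw : r₀ < ‖w‖ := hΦr₀ w hwΦ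
  have hw0 : 0 < ‖w‖ := hr₀.trans hrw
  have hℓw : 0 < ℓ ‖w‖ :=
    lt_of_lt_of_le (mul_pos hC' (Real.rpow_pos_of_pos hw0 _)) (hℓlb _ hrw)
  have hI := tail_le Φ σ ρ ν hσ hρ hν hloc hreg ℓ hℓ0 hℓanti C C' r₀ β hC' hCC' hr₀ hβ
    hℓub ‖w‖ hrw
  have hI0 : 0 ≤ tailInterference ℓ Φ ‖w‖ := tsum_nonneg fun w' => hℓ0 _
  have hℓwx : ℓ ‖x‖ ≤ ℓ ‖w‖ := hℓanti (norm_nonneg w) (norm_nonneg x) hwx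
  have hkey : tailInterference ℓ Φ ‖w‖ + γ₀
      ≤ (γ₀ / ℓ ‖x‖ + σ + ρβ * ‖x‖ + νβ * ‖x‖ ^ 2) * ℓ ‖w‖ := by
    have h1 : γ₀ ≤ γ₀ / ℓ ‖x‖ * ℓ ‖w‖ := by
      rw [div_mul_eq_mul_div, le_div_iff₀ hℓx]
      exact mul_le_mul_of_nonneg_left hℓwx hγ₀.le
    have e1 : (‖w‖ : ℝ) ^ (1 - β) = ‖w‖ * ‖w‖ ^ (-β) := by
      rw [show (1 - β : ℝ) = 1 + -β by ring, Real.rpow_add hw0, Real.rpow_one]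
    have e2 : (‖w‖ : ℝ) ^ (2 - β) = ‖w‖ ^ 2 * ‖w‖ ^ (-β) := by
      rw [show (2 - β : ℝ) = 2 + -β by ring, Real.rpow_add hw0,
        show ((2:ℝ)) = ((2:ℕ):ℝ) by norm_num, Real.rpow_natCast]
    have hb1 : (β:ℝ) - 1 ≠ 0 := by linarith
    have hb2 : (β:ℝ) - 2 ≠ 0 := by linarith
    have hρle : ρ * (C * ‖w‖ ^ (1 - β) / (β - 1)) ≤ ρβ * ‖x‖ * ℓ ‖w‖ := by
      calc ρ * (C * ‖w‖ ^ (1 - β) / (β - 1)) = ρβ * ‖w‖ * (C' * ‖w‖ ^ (-β)) := by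
            rw [e1, hρβ_def]; field_simp
        _ ≤ ρβ * ‖w‖ * ℓ ‖w‖ :=
            mul_le_mul_of_nonneg_left (hℓlb _ hrw) (mul_nonneg hρβ0 hw0.le)
        _ ≤ ρβ * ‖x‖ * ℓ ‖w‖ :=
            mul_le_mul_of_nonneg_right (mul_le_mul_of_nonneg_left hwx hρβ0) (hℓ0 _)
    have hνle : ν * (2 * C * ‖w‖ ^ (2 - β) / (β - 2)) ≤ νβ * ‖x‖ ^ 2 * ℓ ‖w‖ := by
      have hwx2 : ‖w‖ ^ 2 ≤ ‖x‖ ^ 2 := by nlinarith [norm_nonneg w]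
      calc ν * (2 * C * ‖w‖ ^ (2 - β) / (β - 2)) = νβ * ‖w‖ ^ 2 * (C' * ‖w‖ ^ (-β)) := by
            rw [e2, hνβ_def]; field_simp
        _ ≤ νβ * ‖w‖ ^ 2 * ℓ ‖w‖ :=
            mul_le_mul_of_nonneg_left (hℓlb _ hrw) (mul_nonneg hνβ0 (by positivity))
        _ ≤ νβ * ‖x‖ ^ 2 * ℓ ‖w‖ :=
            mul_le_mul_of_nonneg_right (mul_le_mul_of_nonneg_left hwx2 hνβ0) (hℓ0 _)
    have expand : (γ₀ / ℓ ‖x‖ + σ + ρβ * ‖x‖ + νβ * ‖x‖ ^ 2) * ℓ ‖w‖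
        = γ₀ / ℓ ‖x‖ * ℓ ‖w‖ + σ * ℓ ‖w‖ + ρβ * ‖x‖ * ℓ ‖w‖ + νβ * ‖x‖ ^ 2 * ℓ ‖w‖ := by
      ring
    rw [expand]
    linarith
  have hSr : eta ℓ γ₀ σ ρβ νβ ‖x‖ ≤ SrINR ℓ γ₀ Φ w := by
    unfold eta SrINR
    have hIγ : 0 < tailInterference ℓ Φ ‖w‖ + γ₀ := by linarith
    rw [inv_eq_one_div, div_le_div_iff₀ hD hIγ, one_mul]
    nlinarith [hkey]
  exact Real.logb_le_logb_of_le (by norm_num) (by linarith) (by linarith)
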